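/- arXiv:2507.11701 — 3 statements merged into one kernel-verified Lean document; each statement's English description precedes it below -/
import Mathlib

section
/- For 1 ≤ s < n, the number of [s]-restricted prime parking functions on n cars equals Σ_{i=s+1}^{n} C(n,i)·(i−1)^{i−1}·(s−i)^{n−i}. -/
open Finset

def IsRPPF (n s : ℕ) (π : Fin n → ℕ) : Prop :=
  (∀ j, π j ∈ Finset.Icc 1 s) ∧
  ∀ i ∈ Finset.Icc 1 (n - 1), i < (Finset.univ.filter (fun j => π j ≤ i)).card

instance (n s : ℕ) : DecidablePred (IsRPPF n s) := fun π => by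
  unfold IsRPPF; infer_instance

def RFin (n s : ℕ) : Finset (Fin n → ℕ) :=
  (Fintype.piFinset fun _ : Fin n => Finset.Icc 1 s).filter (IsRPPF n s)

lemma mem_RFin {n s : ℕ} {π : Fin n → ℕ} : π ∈ RFin n s ↔ IsRPPF n s π := by
  rw [RFin, Finset.mem_filter, Fintype.mem_piFinset]
  exact ⟨fun h => h.2, fun h => ⟨h.1, h⟩⟩

lemma set_RFin (n s : ℕ) : {π : Fin n → ℕ | IsRPPF n s π} = ↑(RFin n s) := by
  ext π; simp [mem_RFin]

lemma RFin_base (n : ℕ) (hn : 1 ≤ n) : (RFin n 1).card = 1 := by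
  have : RFin n 1 = {fun _ => 1} := by
    ext π
    rw [mem_RFin, Finset.mem_singleton]
    constructor
    · intro h
      funext j
      have := h.1 j
      simp at this
      omega
    · rintro rfl
      constructor
      · intro j; simp
      · intro i hi
        simp only [Finset.mem_Icc] at hi
        rw [Finset.filter_true_of_mem (fun j _ => hi.1), Finset.card_univ, Fintype.card_fin]
        omega
  rw [this, Finset.card_singleton]

lemma count_eq {n : ℕ} (S : Finset (Fin n)) (e : Fin S.card ≃o {x // x ∈ S})
    (π : Fin n → ℕ) (i : ℕ) :
    (Finset.univ.filter (fun k : Fin S.card => π (e k) ≤ i)).card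
      = (S.filter (fun j => π j ≤ i)).card := by
  apply Finset.card_bij (fun k _ => ((e k : {x // x ∈ S}) : Fin n))
  · intro k hk
    simp only [Finset.mem_filter, Finset.mem_univ, true_and] at hk ⊢
    exact ⟨(e k).2, hk⟩
  · intro k1 h1 k2 h2 h
    exact e.injective (Subtype.ext h)
  · intro j hj
    simp only [Finset.mem_filter] at hj
    refine ⟨e.symm ⟨j, hj.1⟩, ?_, ?_⟩
    · simp only [Finset.mem_filter, Finset.mem_univ, true_and, OrderIso.apply_symm_apply]
      exact hj.2
    · simp

lemma fiber_card (n s : ℕ) (hs : 1 ≤ s) (hn : s + 1 < n) (S : Finset (Fin n)) :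
    ((RFin n (s+1)).filter (fun π => Finset.univ.filter (fun j => π j ≤ s) = S)).card
      = if s + 1 ≤ S.card then (RFin S.card s).card else 0 := by
  split_ifs with hS
  · -- bijection case
    have hm : 1 ≤ S.card := by omega
    set e := S.orderIsoOfFin rfl with he
    apply Finset.card_bij' (fun π _ => fun k => π (e k))
      (fun ρ _ => fun j => if hj : j ∈ S then ρ (e.symm ⟨j, hj⟩) else s+1)
    · -- forward maps into RFin S.card s
      intro π hπ
      rw [Finset.mem_filter, mem_RFin] at hπ
      obtain ⟨⟨hval, hcnt⟩, hkey⟩ := hπ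
      have hSle : ∀ j ∈ S, π j ≤ s := by
        intro j hj
        rw [← hkey] at hj
        exact (Finset.mem_filter.mp hj).2
      rw [mem_RFin]
      constructor
      · intro k
        have h1 := hval (e k)
        simp only [Finset.mem_Icc] at h1 ⊢
        exact ⟨h1.1, hSle _ (e k).2⟩
      · intro i hi
        simp only [Finset.mem_Icc] at hi
        by_cases hcase : s ≤ i
        · rw [Finset.filter_true_of_mem (fun k _ => le_trans (hSle _ (e k).2) hcase),
            Finset.card_univ, Fintype.card_fin]
          omega
        · rw [count_eq S e π i]
          have hsub : Finset.univ.filter (fun j => π j ≤ i) = S.filter (fun j => π j ≤ i) := by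
            ext j
            simp only [Finset.mem_filter, Finset.mem_univ, true_and]
            refine ⟨fun h => ⟨?_, h⟩, fun h => h.2⟩
            rw [← hkey]
            simp only [Finset.mem_filter, Finset.mem_univ, true_and]
            omega
          rw [← hsub]
          exact hcnt i (by simp only [Finset.mem_Icc]; omega)
    · -- backward maps into fiber
      intro ρ hρ
      rw [mem_RFin] at hρ
      obtain ⟨hval, hcnt⟩ := hρ
      have hρk : ∀ k : Fin S.card,
          (fun j => if hj : j ∈ S then ρ (e.symm ⟨j, hj⟩) else s+1) ((e k : {x // x ∈ S}) : Fin n)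
            = ρ k := by
        intro k
        simp only [dif_pos (e k).2, Subtype.coe_eta, OrderIso.symm_apply_apply]
      have hπval : ∀ j : Fin n,
          (if hj : j ∈ S then ρ (e.symm ⟨j, hj⟩) else s+1) ∈ Finset.Icc 1 (s+1) := by
        intro j
        by_cases hj : j ∈ S
        · rw [dif_pos hj]
          have := hval (e.symm ⟨j, hj⟩)
          simp only [Finset.mem_Icc] at this ⊢
          omega
        · rw [dif_neg hj]
          simp only [Finset.mem_Icc]
          omega
      have hkey : Finset.univ.filter
          (fun j => (if hj : j ∈ S then ρ (e.symm ⟨j, hj⟩) else s+1) ≤ s) = S := by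
        ext j
        simp only [Finset.mem_filter, Finset.mem_univ, true_and]
        by_cases hj : j ∈ S
        · rw [dif_pos hj]
          have := hval (e.symm ⟨j, hj⟩)
          simp only [Finset.mem_Icc] at this
          simp [hj]
          omega
        · rw [dif_neg hj]
          simp [hj]
      rw [Finset.mem_filter, mem_RFin]
      refine ⟨⟨hπval, ?_⟩, hkey⟩
      intro i hi
      simp only [Finset.mem_Icc] at hi
      show i < (Finset.univ.filter
        (fun j => (if hj : j ∈ S then ρ (e.symm ⟨j, hj⟩) else s+1) ≤ i)).card
      by_cases h1 : i < s
      · have hsub : Finset.univ.filter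
            (fun j => (if hj : j ∈ S then ρ (e.symm ⟨j, hj⟩) else s+1) ≤ i)
            = S.filter (fun j => (if hj : j ∈ S then ρ (e.symm ⟨j, hj⟩) else s+1) ≤ i) := by
          ext j
          simp only [Finset.mem_filter, Finset.mem_univ, true_and]
          refine ⟨fun h => ⟨?_, h⟩, fun h => h.2⟩
          by_contra hjS
          rw [dif_neg hjS] at h
          omega
        rw [hsub, ← count_eq S e _ i]
        have : Finset.univ.filter
            (fun k : Fin S.card =>
              (fun j => if hj : j ∈ S then ρ (e.symm ⟨j, hj⟩) else s+1) ((e k : {x // x ∈ S}) : Fin n) ≤ i)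
            = Finset.univ.filter (fun k : Fin S.card => ρ k ≤ i) := by
          apply Finset.filter_congr
          intro k _
          rw [hρk k]
        rw [this]
        exact hcnt i (by simp only [Finset.mem_Icc]; omega)
      · by_cases h2 : i ≤ s
        · -- i = s
          have hsub : S ⊆ Finset.univ.filter
              (fun j => (if hj : j ∈ S then ρ (e.symm ⟨j, hj⟩) else s+1) ≤ i) := by
            intro j hj
            simp only [Finset.mem_filter, Finset.mem_univ, true_and]
            rw [dif_pos hj]
            have := hval (e.symm ⟨j, hj⟩)
            simp only [Finset.mem_Icc] at this
            omega
          have := Finset.card_le_card hsub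
          omega
        · rw [Finset.filter_true_of_mem]
          · rw [Finset.card_univ, Fintype.card_fin]; omega
          · intro j _
            have := hπval j
            simp only [Finset.mem_Icc] at this
            omega
    · -- left inverse
      intro π hπ
      rw [Finset.mem_filter, mem_RFin] at hπ
      obtain ⟨⟨hval, _⟩, hkey⟩ := hπ
      funext j
      by_cases hj : j ∈ S
      · rw [dif_pos hj]
        congr 1
        have : (e (e.symm ⟨j, hj⟩) : Fin n) = ((⟨j, hj⟩ : {x // x ∈ S}) : Fin n) := by
          rw [OrderIso.apply_symm_apply]
        simpa using this
      · rw [dif_neg hj]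
        have h1 := hval j
        simp only [Finset.mem_Icc] at h1
        have h2 : ¬ π j ≤ s := by
          intro hle
          apply hj
          rw [← hkey]
          simp only [Finset.mem_filter, Finset.mem_univ, true_and]
          exact hle
        omega
    · -- right inverse
      intro ρ hρ
      funext k
      simp only [dif_pos (e k).2, Subtype.coe_eta, OrderIso.symm_apply_apply]
  · -- empty case
    rw [Finset.card_eq_zero, Finset.filter_eq_empty_iff]
    intro π hπ hkey
    rw [mem_RFin] at hπ
    have h2 := hπ.2 s (by simp only [Finset.mem_Icc]; omega)
    rw [hkey] at h2
    omega

lemma RFin_rec (n s : ℕ) (hs : 1 ≤ s) (hn : s + 1 < n) :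
    (RFin n (s+1)).card = ∑ m ∈ Finset.Icc (s+1) n, n.choose m * (RFin m s).card := by
  rw [Finset.card_eq_sum_card_fiberwise
    (f := fun π => Finset.univ.filter (fun j => π j ≤ s)) (t := Finset.univ)
    (fun π _ => Finset.mem_univ _)]
  set g : ℕ → ℕ := fun m => if s + 1 ≤ m then (RFin m s).card else 0 with hg
  have step : ∀ S ∈ (Finset.univ : Finset (Finset (Fin n))),
      ((RFin n (s+1)).filter
        (fun π => (fun π => Finset.univ.filter (fun j => π j ≤ s)) π = S)).card
      = g S.card := by
    intro S _
    exact fiber_card n s hs hn S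
  rw [Finset.sum_congr rfl step, ← Finset.powerset_univ, Finset.sum_powerset_apply_card]
  rw [Finset.card_univ, Fintype.card_fin]
  have : ∀ m ∈ Finset.range (n+1),
      n.choose m • g m
      = if s + 1 ≤ m then n.choose m * (RFin m s).card else 0 := by
    intro m _
    by_cases h : s + 1 ≤ m <;> simp [hg, h] <;> intro h' <;> exfalso <;> omega
  rw [Finset.sum_congr rfl this, ← Finset.sum_filter]
  congr 1
  ext m
  simp only [Finset.mem_filter, Finset.mem_range, Finset.mem_Icc]
  omega

/-- n-th finite difference of a monomial of lower degree vanishes. -/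
lemma altsum_pow (n : ℕ) : ∀ j, j < n →
    ∑ i ∈ range (n + 1), (-1 : ℤ) ^ i * (n.choose i : ℤ) * (i : ℤ) ^ j = 0 := by
  induction n with
  | zero => intro j hj; omega
  | succ n ih =>
    intro j hj
    match j with
    | 0 =>
      simpa using Int.alternating_sum_range_choose_of_ne (Nat.succ_ne_zero n)
    | j + 1 =>
      rw [Finset.sum_range_succ']
      simp only [Nat.cast_zero, zero_pow (Nat.succ_ne_zero j), mul_zero, add_zero]
      have key : ∀ i, ((n+1).choose (i+1) : ℤ) * ((i:ℤ)+1)^(j+1)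
          = ((n+1):ℤ) * (n.choose i : ℤ) * ((i:ℤ)+1)^j := by
        intro i
        have h := Nat.add_one_mul_choose_eq n i
        have h' : ((n+1 : ℕ) : ℤ) * (n.choose i : ℤ) = ((n+1).choose (i+1) : ℤ) * ((i:ℤ)+1) := by
          exact_mod_cast congrArg (Nat.cast : ℕ → ℤ) h
        calc ((n+1).choose (i+1) : ℤ) * ((i:ℤ)+1)^(j+1)
            = (((n+1).choose (i+1) : ℤ) * ((i:ℤ)+1)) * ((i:ℤ)+1)^j := by ring
          _ = ((n+1):ℤ) * (n.choose i : ℤ) * ((i:ℤ)+1)^j := by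
              rw [← h']; push_cast; ring
      have : ∑ i ∈ range (n + 1), (-1 : ℤ) ^ (i+1) * ((n+1).choose (i+1) : ℤ) * ((i:ℤ)+1) ^ (j+1)
          = -((n+1):ℤ) * ∑ i ∈ range (n + 1), (-1 : ℤ) ^ i * (n.choose i : ℤ) * ((i:ℤ)+1) ^ j := by
        rw [Finset.mul_sum]
        refine Finset.sum_congr rfl fun i _ => ?_
        linear_combination ((-1:ℤ)^i * (-1)) * key i
      have conv1 : ∑ i ∈ range (n + 1), (-1 : ℤ) ^ (i+1) * ((n+1).choose (i+1) : ℤ) * (((i+1):ℕ):ℤ) ^ (j+1)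
          = ∑ i ∈ range (n + 1), (-1 : ℤ) ^ (i+1) * ((n+1).choose (i+1) : ℤ) * ((i:ℤ)+1) ^ (j+1) := by
        refine Finset.sum_congr rfl fun i _ => ?_
        push_cast
        ring
      rw [conv1, this]
      have expand : ∀ i : ℕ, ((i:ℤ)+1) ^ j = ∑ t ∈ range (j+1), (i:ℤ)^t * (j.choose t : ℤ) := by
        intro i
        simpa using add_pow (i : ℤ) 1 j
      have : ∑ i ∈ range (n + 1), (-1 : ℤ) ^ i * (n.choose i : ℤ) * ((i:ℤ)+1) ^ j = 0 := by
        calc ∑ i ∈ range (n + 1), (-1 : ℤ) ^ i * (n.choose i : ℤ) * ((i:ℤ)+1) ^ j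
            = ∑ i ∈ range (n + 1), ∑ t ∈ range (j+1),
                (j.choose t : ℤ) * ((-1 : ℤ) ^ i * (n.choose i : ℤ) * (i:ℤ)^t) := by
              refine Finset.sum_congr rfl fun i _ => ?_
              rw [expand i, Finset.mul_sum]
              refine Finset.sum_congr rfl fun t _ => ?_
              ring
          _ = ∑ t ∈ range (j+1), (j.choose t : ℤ) *
                ∑ i ∈ range (n + 1), (-1 : ℤ) ^ i * (n.choose i : ℤ) * (i:ℤ)^t := by
              rw [Finset.sum_comm]
              refine Finset.sum_congr rfl fun t _ => ?_
              rw [Finset.mul_sum]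
          _ = 0 := by
              refine Finset.sum_eq_zero fun t ht => ?_
              rw [ih t (by simp at ht; omega)]
              ring
      rw [this]
      ring

def Gsum (n s : ℕ) : ℤ :=
  ∑ i ∈ Finset.Icc (s + 1) n,
    (n.choose i : ℤ) * ((i : ℤ) - 1) ^ (i - 1) * ((s : ℤ) - i) ^ (n - i)

lemma altsum_poly (n j : ℕ) (hj : j < n) :
    ∑ i ∈ range (n + 1), (-1 : ℤ) ^ i * (n.choose i : ℤ) * ((i:ℤ) - 1) ^ j = 0 := by
  have expand : ∀ i : ℕ, ((i:ℤ) - 1) ^ j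
      = ∑ t ∈ range (j+1), (i:ℤ)^t * (-1:ℤ)^(j-t) * (j.choose t : ℤ) := by
    intro i
    simpa [sub_eq_add_neg] using add_pow (i : ℤ) (-1) j
  calc ∑ i ∈ range (n + 1), (-1 : ℤ) ^ i * (n.choose i : ℤ) * ((i:ℤ) - 1) ^ j
      = ∑ i ∈ range (n + 1), ∑ t ∈ range (j+1),
          ((-1:ℤ)^(j-t) * (j.choose t : ℤ)) * ((-1 : ℤ) ^ i * (n.choose i : ℤ) * (i:ℤ)^t) := by
        refine Finset.sum_congr rfl fun i _ => ?_
        rw [expand i, Finset.mul_sum]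
        refine Finset.sum_congr rfl fun t _ => ?_
        ring
    _ = ∑ t ∈ range (j+1), ((-1:ℤ)^(j-t) * (j.choose t : ℤ)) *
          ∑ i ∈ range (n + 1), (-1 : ℤ) ^ i * (n.choose i : ℤ) * (i:ℤ)^t := by
        rw [Finset.sum_comm]
        exact Finset.sum_congr rfl fun t _ => (Finset.mul_sum _ _ _).symm
    _ = 0 := by
        refine Finset.sum_eq_zero fun t ht => ?_
        rw [altsum_pow n t (by simp at ht; omega)]
        ring

lemma Gsum_base (n : ℕ) (hn : 2 ≤ n) : Gsum n 1 = 1 := by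
  unfold Gsum
  rw [show (1:ℕ)+1 = 2 from rfl, Nat.cast_one]
  have step1 : ∀ i ∈ Finset.Icc 2 n,
      (n.choose i : ℤ) * ((i : ℤ) - 1) ^ (i - 1) * ((1 : ℤ) - i) ^ (n - i)
        = (-1:ℤ)^n * ((-1:ℤ)^i * (n.choose i : ℤ) * ((i:ℤ) - 1) ^ (n-1)) := by
    intro i hi
    simp only [Finset.mem_Icc] at hi
    have h1 : ((1 : ℤ) - i) ^ (n - i) = (-1:ℤ)^(n-i) * ((i:ℤ) - 1) ^ (n - i) := by
      rw [show (1:ℤ) - i = (-1) * ((i:ℤ) - 1) by ring, mul_pow]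
    have h2 : ((i : ℤ) - 1) ^ (i - 1) * ((i:ℤ) - 1) ^ (n - i) = ((i:ℤ) - 1) ^ (n-1) := by
      rw [← pow_add]
      congr 1
      omega
    have h3 : (-1:ℤ)^(n-i) = (-1:ℤ)^n * (-1:ℤ)^i := by
      rw [← pow_add, show n + i = (n-i) + 2*i by omega, pow_add, pow_mul]
      simp
    rw [h1, h3]
    linear_combination ((n.choose i : ℤ) * ((-1:ℤ)^n * (-1:ℤ)^i)) * h2
  rw [Finset.sum_congr rfl step1, ← Finset.mul_sum]
  set f : ℕ → ℤ := fun i => (-1:ℤ)^i * (n.choose i : ℤ) * ((i:ℤ) - 1) ^ (n-1) with hf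
  have full : ∑ i ∈ range (n+1), f i = 0 := altsum_poly n (n-1) (by omega)
  have split : ∑ i ∈ range (n+1), f i = f 0 + f 1 + ∑ i ∈ Finset.Icc 2 n, f i := by
    have e1 : Finset.Icc 2 n = Finset.Ico 2 (n+1) := by rw [Finset.Ico_add_one_right_eq_Icc]
    rw [e1, Finset.sum_Ico_eq_sum_range]
    rw [show n + 1 = (n-1) + 2 by omega]
    rw [Finset.sum_range_succ', Finset.sum_range_succ']
    rw [show (n-1) + 2 - 2 = n - 1 by omega]
    have hk : ∀ k, f (k+1+1) = f (2+k) := fun k => by rw [show k+1+1 = 2+k by omega]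
    simp only [hk]
    ring
  have f0 : f 0 = (-1:ℤ)^(n-1) := by
    simp [hf]
  have f1 : f 1 = 0 := by
    simp [hf, zero_pow (show n-1 ≠ 0 by omega)]
  have : ∑ i ∈ Finset.Icc 2 n, f i = -(-1:ℤ)^(n-1) := by
    rw [full] at split
    linarith [split, f0.symm, f1.symm]
  rw [this]
  have h3 : (-1:ℤ)^n * (-1:ℤ)^(n-1) = -1 := by
    rw [← pow_add, show n + (n-1) = 2*(n-1)+1 by omega, pow_succ, pow_mul]
    simp
  linear_combination (-1 : ℤ) * h3

lemma Gsum_rec (n s : ℕ) (hs : 1 ≤ s) (hn : s + 1 < n) :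
    ∑ m ∈ Finset.Icc (s+1) n, (n.choose m : ℤ) * Gsum m s = Gsum n (s+1) := by
  unfold Gsum
  have step1 : ∑ m ∈ Finset.Icc (s+1) n, (n.choose m : ℤ) *
        ∑ i ∈ Finset.Icc (s+1) m, (m.choose i:ℤ)*((i:ℤ)-1)^(i-1)*((s:ℤ)-i)^(m-i)
      = ∑ m ∈ Finset.Icc (s+1) n, ∑ i ∈ Finset.Icc (s+1) n,
        (n.choose m : ℤ)*((m.choose i:ℤ)*((i:ℤ)-1)^(i-1)*((s:ℤ)-i)^(m-i)) := by
    refine Finset.sum_congr rfl fun m hm => ?_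
    simp only [Finset.mem_Icc] at hm
    rw [Finset.sum_subset (Finset.Icc_subset_Icc_right hm.2)]
    · rw [Finset.mul_sum]
    · intro i hi hni
      simp only [Finset.mem_Icc] at hi hni
      have : m < i := by omega
      rw [Nat.choose_eq_zero_of_lt this]
      push_cast
      ring
  rw [step1, Finset.sum_comm]
  have step2 : ∀ i ∈ Finset.Icc (s+1) n,
      ∑ m ∈ Finset.Icc (s+1) n, (n.choose m : ℤ)*((m.choose i:ℤ)*((i:ℤ)-1)^(i-1)*((s:ℤ)-i)^(m-i))
      = (n.choose i : ℤ) * ((i:ℤ)-1)^(i-1) * (((s:ℤ)+1)-i)^(n-i) := by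
    intro i hi
    simp only [Finset.mem_Icc] at hi
    have sub : ∑ m ∈ Finset.Icc (s+1) n, (n.choose m : ℤ)*((m.choose i:ℤ)*((i:ℤ)-1)^(i-1)*((s:ℤ)-i)^(m-i))
        = ∑ m ∈ Finset.Icc i n, (n.choose m : ℤ)*((m.choose i:ℤ)*((i:ℤ)-1)^(i-1)*((s:ℤ)-i)^(m-i)) := by
      rw [Finset.sum_subset (Finset.Icc_subset_Icc_left hi.1)]
      intro m hm hmn
      simp only [Finset.mem_Icc] at hm hmn
      have : m < i := by omega
      rw [Nat.choose_eq_zero_of_lt this]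
      push_cast
      ring
    rw [sub, ← Finset.Ico_add_one_right_eq_Icc, Finset.sum_Ico_eq_sum_range]
    have term : ∀ k ∈ Finset.range (n + 1 - i),
        ((n.choose (i+k) : ℤ))*(((i+k).choose i:ℤ)*((i:ℤ)-1)^(i-1)*((s:ℤ)-i)^((i+k)-i))
        = ((i:ℤ)-1)^(i-1) * (n.choose i : ℤ) * (((s:ℤ)-i)^k * ((n-i).choose k : ℤ)) := by
      intro k hk
      simp only [Finset.mem_range] at hk
      have h1 : n.choose (i+k) * (i+k).choose i = n.choose i * (n-i).choose k := by
        have := Nat.choose_mul (n := n) (show i ≤ i + k by omega)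
        simpa using this
      have h2 : (i+k) - i = k := by omega
      rw [h2]
      have h1' : ((n.choose (i+k) : ℤ)) * ((i+k).choose i : ℤ) = (n.choose i : ℤ) * ((n-i).choose k : ℤ) := by
        exact_mod_cast congrArg (Nat.cast : ℕ → ℤ) h1
      linear_combination (((i:ℤ)-1)^(i-1) * ((s:ℤ)-i)^k) * h1'
    rw [Finset.sum_congr rfl term, ← Finset.mul_sum]
    have bin : ∑ k ∈ Finset.range (n + 1 - i), ((s:ℤ)-i)^k * ((n-i).choose k : ℤ)
        = (((s:ℤ)+1)-i)^(n-i) := by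
      have := add_pow ((s:ℤ)-(i:ℤ)) 1 (n-i)
      simp only [one_pow, mul_one] at this
      rw [show n + 1 - i = (n-i) + 1 by omega,
        show ((s:ℤ)+1-(i:ℤ)) = ((s:ℤ)-(i:ℤ)+1) by ring]
      exact this.symm
    rw [bin]
    ring
  rw [Finset.sum_congr rfl step2]
  rw [show s + 1 + 1 = (s+1) + 1 from rfl]
  rw [← Finset.Ico_add_one_right_eq_Icc, ← Finset.Ico_add_one_right_eq_Icc,
    Finset.sum_eq_sum_Ico_succ_bot (by omega : s+1 < n+1)]
  have : ((n.choose (s+1) : ℤ)) * (((s+1:ℕ):ℤ)-1)^((s+1)-1) * (((s:ℤ)+1)-((s+1:ℕ):ℤ))^(n-(s+1)) = 0 := by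
    push_cast
    rw [show (s:ℤ) + 1 - ((s:ℤ)+1) = 0 by ring]
    rw [zero_pow (show n - (s+1) ≠ 0 by omega)]
    ring
  rw [this, zero_add]
  refine Finset.sum_congr rfl fun i hi => ?_
  push_cast
  ring

lemma main_count : ∀ s, 1 ≤ s → ∀ n, s < n → ((RFin n s).card : ℤ) = Gsum n s := by
  intro s hs
  induction s, hs using Nat.le_induction with
  | base =>
    intro n hn
    rw [RFin_base n (by omega), Gsum_base n (by omega)]
    norm_num
  | succ s hs ih =>
    intro n hn
    rw [RFin_rec n s hs hn]
    push_cast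
    rw [← Gsum_rec n s hs hn]
    refine Finset.sum_congr rfl fun m hm => ?_
    simp only [Finset.mem_Icc] at hm
    rw [ih m (by omega)]

theorem count_restricted_ppf_sum (n s : ℕ) (h1 : 1 ≤ s) (h2 : s < n) :
    ({π : Fin n → ℕ | IsRPPF n s π}.ncard : ℤ) =
      ∑ i ∈ Finset.Icc (s + 1) n,
        (n.choose i : ℤ) * ((i : ℤ) - 1) ^ (i - 1) * ((s : ℤ) - i) ^ (n - i) := by
  rw [set_RFin, Set.ncard_coe_finset]
  exact main_count s h1 n h2
end

section
/- Abel's binomial theorem: for all positive integers n and all complex numbers x, y, (x+y+n)^n = Σ_{i=0}^{n} C(n,i)·x·(x+i)^{i−1}·(y+n−i)^{n−i}. -/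
open Finset

/-- Pascal rearrangement of alternating sums. -/
lemma pascal_rearrange (n : ℕ) (f : ℕ → ℂ) :
    ∑ i ∈ range (n + 2), (-1 : ℂ) ^ i * ((n+1).choose i) * f i =
      ∑ i ∈ range (n + 1), (-1 : ℂ) ^ i * (n.choose i) * (f i - f (i + 1)) := by
  rw [Finset.sum_range_succ']
  have h1 : ∀ i ∈ range (n+1), (-1 : ℂ) ^ (i+1) * ((n+1).choose (i+1)) * f (i+1)
      = -((-1:ℂ)^i * (n.choose i) * f (i+1)) + (-1:ℂ)^(i+1) * (n.choose (i+1)) * f (i+1) := by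
    intro i _
    rw [Nat.choose_succ_succ]
    push_cast
    ring
  rw [Finset.sum_congr rfl h1, Finset.sum_add_distrib]
  have h2 : ∑ i ∈ range (n+1), (-1:ℂ)^(i+1) * (n.choose (i+1)) * f (i+1)
      = ∑ i ∈ range (n+1), (-1:ℂ)^i * (n.choose i) * f i - f 0 := by
    have := Finset.sum_range_succ' (fun i => (-1:ℂ)^i * (n.choose i) * f i) (n+1)
    rw [Finset.sum_range_succ] at this
    simp only [Nat.choose_succ_self, Nat.cast_zero, pow_zero, Nat.choose_zero_right,
      Nat.cast_one, one_mul, mul_zero, zero_mul, add_zero] at this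
    linear_combination -this
  rw [h2]
  simp only [mul_sub, Finset.sum_sub_distrib, Finset.sum_neg_distrib]
  simp only [Nat.choose_zero_right, Nat.cast_one, pow_zero, one_mul, mul_one]
  ring

/-- Finite differences annihilate lower-degree polynomials. -/
lemma fd_lemma : ∀ n m : ℕ, m < n → ∀ x : ℂ,
    ∑ i ∈ range (n + 1), (-1 : ℂ) ^ i * (n.choose i) * (x + i) ^ m = 0 := by
  intro n
  induction n with
  | zero => intro m hm; omega
  | succ n ih =>
    intro m hm x
    rw [pascal_rearrange n (fun i => (x + i) ^ m)]
    have key : ∀ i ∈ range (n+1), ((x + (i:ℕ)) ^ m - (x + ((i+1:ℕ):ℕ)) ^ m)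
        = -∑ k ∈ range m, (m.choose k : ℂ) * (x + i) ^ k := by
      intro i _
      have hb : (x + ((i+1:ℕ):ℕ) : ℂ) ^ m = ∑ k ∈ range (m+1), (x + i) ^ k * (m.choose k) := by
        push_cast
        rw [show x + ((i:ℂ) + 1) = (x + i) + 1 by ring, add_pow]
        simp
      rw [hb, Finset.sum_range_succ, Nat.choose_self, Nat.cast_one, mul_one]
      have hs : ∑ k ∈ range m, (x + (i:ℂ)) ^ k * (m.choose k)
          = ∑ k ∈ range m, (m.choose k : ℂ) * (x + i) ^ k :=
        Finset.sum_congr rfl fun k _ => mul_comm _ _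
      rw [hs]; ring
    calc ∑ i ∈ range (n+1), (-1:ℂ)^i * (n.choose i) * ((x+(i:ℕ))^m - (x+((i+1:ℕ):ℕ))^m)
        = ∑ i ∈ range (n+1), ∑ k ∈ range m,
            -((m.choose k : ℂ) * ((-1:ℂ)^i * (n.choose i) * (x+i)^k)) := by
          refine Finset.sum_congr rfl fun i hi => ?_
          rw [key i hi, mul_neg, Finset.mul_sum, Finset.sum_neg_distrib]
          congr 1
          exact Finset.sum_congr rfl fun k _ => by ring
      _ = ∑ k ∈ range m, -((m.choose k : ℂ) *
            ∑ i ∈ range (n+1), (-1:ℂ)^i * (n.choose i) * (x+i)^k) := by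
          rw [Finset.sum_comm]
          exact Finset.sum_congr rfl fun k _ => by
            rw [Finset.mul_sum, Finset.sum_neg_distrib]
      _ = 0 := by
          refine Finset.sum_eq_zero fun k hk => ?_
          rw [ih k (lt_of_lt_of_le (Finset.mem_range.mp hk) (by omega)) x, mul_zero, neg_zero]

open Polynomial

/-- Evaluation at `y = -x-N` vanishes. -/
lemma eval_vanish (N : ℕ) (hN : 0 < N) (x : ℂ) :
    (-x) ^ N + ∑ i ∈ Finset.Icc 1 N,
      (N.choose i : ℂ) * x * (x + i) ^ (i - 1) * (-x - i) ^ (N - i) = 0 := by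
  have hterm : ∀ i ∈ Finset.Icc 1 N,
      (N.choose i : ℂ) * x * (x + i) ^ (i - 1) * (-x - i) ^ (N - i)
        = (-1:ℂ)^N * x * ((-1:ℂ)^i * (N.choose i) * (x + i) ^ (N - 1)) := by
    intro i hi
    obtain ⟨hi1, hiN⟩ := Finset.mem_Icc.mp hi
    have h1 : (-x - (i:ℂ)) = -(x + i) := by ring
    have h2 : (-(x + (i:ℂ))) ^ (N - i) = (-1:ℂ)^(N-i) * (x + i)^(N-i) := by
      rw [neg_pow]
    have h3 : (x + (i:ℂ)) ^ (i - 1) * (x + i)^(N - i) = (x + i)^(N-1) := by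
      rw [← pow_add]
      congr 1
      omega
    have h4 : ((-1:ℂ))^(N-i) = (-1:ℂ)^N * (-1:ℂ)^i := by
      have h5 : N + i = (N - i) + 2 * i := by omega
      rw [← pow_add, h5, pow_add, pow_mul, neg_one_sq, one_pow, mul_one]
    rw [h1, h2, h4]
    ring_nf
    linear_combination (↑(N.choose i) * x * ((-1:ℂ)^N * (-1)^i) : ℂ) * h3
  rw [Finset.sum_congr rfl hterm]
  have hx : x * x^(N-1) = x^N := by
    rw [← pow_succ']
    congr 1
    omega
  have h0 : (-x)^N = (-1:ℂ)^N * x * ((-1:ℂ)^0 * ((N.choose 0 : ℕ):ℂ) * (x + ((0:ℕ):ℂ)) ^ (N-1)) := by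
    rw [neg_pow, ← hx, Nat.choose_zero_right]
    push_cast
    ring
  rw [h0, ← Finset.mul_sum, ← mul_add]
  have hins : (insert 0 (Finset.Icc 1 N)) = Finset.range (N + 1) := by
    ext j; simp [Finset.mem_range, Finset.mem_Icc]; omega
  have hsum : (-1:ℂ)^(0:ℕ) * ((N.choose 0 : ℕ):ℂ) * (x + ((0:ℕ):ℂ))^(N-1) +
      ∑ i ∈ Finset.Icc 1 N, (-1:ℂ)^i * ((N.choose i : ℕ):ℂ) * (x + (i:ℂ))^(N-1)
        = ∑ i ∈ Finset.range (N+1), (-1:ℂ)^i * ((N.choose i : ℕ):ℂ) * (x + (i:ℂ))^(N-1) := by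
    rw [← hins, Finset.sum_insert (by simp : (0:ℕ) ∉ Finset.Icc 1 N)]
  rw [hsum, fd_lemma N (N-1) (by omega) x, mul_zero]

/-- Abel's identity as a polynomial identity in `y`. -/
lemma abel_poly : ∀ n : ℕ, 0 < n → ∀ x : ℂ,
    (X + C (x + n)) ^ n =
      (X + C (n : ℂ)) ^ n +
        ∑ i ∈ Finset.Icc 1 n,
          C ((n.choose i : ℂ) * x * (x + i) ^ (i - 1)) * (X + C ((n : ℂ) - i)) ^ (n - i) := by
  intro n
  induction n with
  | zero => omega
  | succ n ih =>
    intro _ x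
    rcases Nat.eq_zero_or_pos n with rfl | hn
    · simp [Finset.Icc_self]
      ring
    · have IH := ih hn x
      have IHc := congrArg (fun p => p.comp (X + 1)) IH
      simp only [add_comp, pow_comp, X_comp, C_comp, Polynomial.sum_comp, mul_comp] at IHc
      have hc1 : (X + 1 + C (x + (n:ℂ))) = X + C (x + ((n+1:ℕ):ℂ)) := by
        rw [← C_1, add_assoc, ← C_add]
        congr 1
        push_cast
        ring
      have hc2 : (X + 1 + C ((n:ℕ):ℂ)) = X + C (((n+1:ℕ):ℂ)) := by
        rw [← C_1, add_assoc, ← C_add]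
        congr 1
        push_cast
        ring
      have hc3 : ∀ i : ℕ, (X + 1 + C ((n:ℂ) - i)) = X + C ((((n+1:ℕ)):ℂ) - i) := by
        intro i
        rw [← C_1, add_assoc, ← C_add]
        congr 1
        push_cast
        ring
      rw [hc1, hc2] at IHc
      rw [Finset.sum_congr rfl (fun i _ => by rw [hc3 i])] at IHc
      set P : ℂ[X] := (X + C (x + ((n+1:ℕ):ℂ))) ^ (n+1) with hPdef
      set Q : ℂ[X] := (X + C (((n+1:ℕ):ℂ))) ^ (n+1) +
        ∑ i ∈ Finset.Icc 1 (n+1),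
          C (((n+1).choose i : ℂ) * x * (x + i) ^ (i - 1)) * (X + C ((((n+1:ℕ)):ℂ) - i)) ^ (n+1 - i) with hQdef
      have hP : derivative P = C (((n+1:ℕ)):ℂ) * (X + C (x + ((n+1:ℕ):ℂ))) ^ n := by
        rw [hPdef, derivative_X_add_C_pow]
        norm_num
      have hQ : derivative Q = C (((n+1:ℕ)):ℂ) * ((X + C (((n+1:ℕ):ℂ)))^n +
          ∑ i ∈ Finset.Icc 1 n,
            C ((n.choose i : ℂ) * x * (x + i) ^ (i - 1)) * (X + C ((((n+1:ℕ)):ℂ) - i)) ^ (n - i)) := by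
        rw [hQdef, derivative_add, derivative_X_add_C_pow, derivative_sum]
        have hterm : ∀ i ∈ Finset.Icc 1 (n+1),
            derivative (C (((n+1).choose i : ℂ) * x * (x + i) ^ (i - 1)) * (X + C ((((n+1:ℕ)):ℂ) - i)) ^ (n+1 - i))
              = C (((n+1).choose i : ℂ) * x * (x + i) ^ (i - 1)) *
                  (C (((n+1-i:ℕ)):ℂ) * (X + C ((((n+1:ℕ)):ℂ) - i)) ^ (n - i)) := by
          intro i hi
          obtain ⟨hi1, hi2⟩ := Finset.mem_Icc.mp hi
          have he : n + 1 - i - 1 = n - i := by omega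
          rw [derivative_C_mul, derivative_X_add_C_pow, he]
        rw [Finset.sum_congr rfl hterm,
          ← Finset.insert_Icc_right_eq_Icc_add_one (by omega : 1 ≤ n + 1),
          Finset.sum_insert (by simp : n + 1 ∉ Finset.Icc 1 n)]
        have htop : C (((n+1).choose (n+1) : ℂ) * x * (x + ((n+1:ℕ):ℂ)) ^ ((n+1) - 1)) *
            (C (((n+1-(n+1):ℕ)):ℂ) * (X + C ((((n+1:ℕ)):ℂ) - ((n+1:ℕ):ℂ))) ^ (n - (n+1))) = 0 := by
          simp
        rw [htop, zero_add, mul_add, Finset.mul_sum]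
        congr 1
        refine Finset.sum_congr rfl fun i hi => ?_
        obtain ⟨hi1, hi2⟩ := Finset.mem_Icc.mp hi
        have hnat : (n+1).choose i * (n+1-i) = (n+1) * n.choose i := by
          rw [← Nat.choose_succ_right_eq, ← Nat.add_one_mul_choose_eq]
        have hcast : (((n+1).choose i : ℕ):ℂ) * (((n+1-i:ℕ)):ℂ) = (((n+1:ℕ)):ℂ) * ((n.choose i : ℕ):ℂ) := by
          rw [← Nat.cast_mul, ← Nat.cast_mul, hnat]
        rw [← mul_assoc, ← mul_assoc, ← C_mul, ← C_mul]
        congr 2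
        linear_combination (x * (x + (i:ℂ))^(i-1)) * hcast
      have hPQ : derivative (P - Q) = 0 := by
        rw [derivative_sub, hP, hQ, ← IHc, sub_self]
      have hC := eq_C_of_derivative_eq_zero hPQ
      set t0 : ℂ := -x - ((n+1:ℕ):ℂ) with ht0
      have heP : eval t0 P = 0 := by
        rw [hPdef]
        simp only [eval_pow, eval_add, eval_X, eval_C, ht0]
        rw [show -x - ((n+1:ℕ):ℂ) + (x + ((n+1:ℕ):ℂ)) = 0 by ring]
        exact zero_pow (by omega)
      have heQ : eval t0 Q = 0 := by
        rw [hQdef]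
        simp only [eval_add, eval_pow, eval_mul, eval_X, eval_C, eval_finset_sum, ht0]
        rw [show -x - ((n+1:ℕ):ℂ) + ((n+1:ℕ):ℂ) = -x by ring]
        have hv := eval_vanish (n+1) (by omega) x
        rw [← hv]
        congr 1
        refine Finset.sum_congr rfl fun i hi => ?_
        rw [show -x - ((n+1:ℕ):ℂ) + (((n+1:ℕ):ℂ) - i) = -x - i by ring]
      have he : eval t0 (P - Q) = 0 := by rw [eval_sub, heP, heQ, sub_zero]
      rw [hC, eval_C] at he
      rw [he, map_zero] at hC
      exact sub_eq_zero.mp hC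


/-- Abel's binomial theorem. The `i = 0` summand `C(n,0)·x·(x+0)^{-1}·(y+n)^n`
is interpreted as `(y+n)^n`. -/
theorem abel_binomial (n : ℕ) (hn : 0 < n) (x y : ℂ) :
    (x + y + n) ^ n =
      (y + n) ^ n +
        ∑ i ∈ Finset.Icc 1 n,
          (n.choose i : ℂ) * x * (x + i) ^ (i - 1) * (y + n - i) ^ (n - i) := by
  have h := abel_poly n hn x
  have h2 := congrArg (eval y) h
  simp only [eval_pow, eval_add, eval_X, eval_C, eval_finset_sum, eval_mul] at h2
  rw [show x + y + (n:ℂ) = y + (x + n) by ring, h2]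
  congr 1
  refine Finset.sum_congr rfl fun i hi => ?_
  rw [show y + ((n:ℂ) - i) = y + n - i by ring]
end

section
/- For 1 ≤ s ≤ n, the number-of-ones enumerator of [s]-restricted parking functions satisfies Σ_{π ∈ PF_{n|[s]}} x^{#π⁻¹({1})} = (s−1+x)^n − Σ_{i=0}^{s−1} C(n,i)·x·(x+i)^{i−1}·(s−i−1)^{n−i} as polynomials in x. -/
open Polynomial Finset

noncomputable def cmpS (m : ℕ) (p : ℤ[X]) : ℤ[X] :=
  ∑ k ∈ Finset.range (m+1), (-1:ℤ[X])^k * (m.choose k : ℤ[X]) * p.comp (X + C (k:ℤ))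

lemma cmpS_succ (m : ℕ) (p : ℤ[X]) :
    cmpS (m+1) p = cmpS m (p - p.comp (X + C 1)) := by
  have hcomp : ∀ k : ℕ, (p.comp (X + C 1)).comp (X + C (k:ℤ)) = p.comp (X + C ((k:ℤ)+1)) := by
    intro k
    rw [Polynomial.comp_assoc]
    simp [add_comp, add_assoc, C_add]
  have expand : cmpS m (p - p.comp (X + C 1)) =
      (∑ k ∈ Finset.range (m+1), (-1:ℤ[X])^k * (m.choose k : ℤ[X]) * p.comp (X + C (k:ℤ)))
      - ∑ k ∈ Finset.range (m+1), (-1:ℤ[X])^k * (m.choose k : ℤ[X]) * p.comp (X + C ((k:ℤ)+1)) := by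
    unfold cmpS
    rw [← Finset.sum_sub_distrib]
    refine Finset.sum_congr rfl fun k hk => ?_
    rw [Polynomial.sub_comp, hcomp k]
    ring
  rw [expand, eq_sub_iff_add_eq]
  unfold cmpS
  rw [Finset.sum_range_succ' (fun k => (-1:ℤ[X])^k * ((m+1).choose k : ℤ[X]) * p.comp (X + C (k:ℤ))) (m+1),
      Finset.sum_range_succ' (fun k => (-1:ℤ[X])^k * (m.choose k : ℤ[X]) * p.comp (X + C (k:ℤ))) m]
  have hext : (∑ k ∈ Finset.range m, (fun k => (-1:ℤ[X])^k * (m.choose k : ℤ[X]) * p.comp (X + C (k:ℤ))) (k+1))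
      = ∑ k ∈ Finset.range (m+1), (-1:ℤ[X])^(k+1) * (m.choose (k+1) : ℤ[X]) * p.comp (X + C ((k:ℤ)+1)) := by
    rw [Finset.sum_range_succ]
    simp [Nat.choose_succ_self]
  rw [hext]
  have hcombine : (∑ k ∈ Finset.range (m+1), (fun k => (-1:ℤ[X])^k * ((m+1).choose k : ℤ[X]) * p.comp (X + C (k:ℤ))) (k+1))
      + ∑ k ∈ Finset.range (m+1), (-1:ℤ[X])^k * (m.choose k : ℤ[X]) * p.comp (X + C ((k:ℤ)+1))
      = ∑ k ∈ Finset.range (m+1), (-1:ℤ[X])^(k+1) * (m.choose (k+1) : ℤ[X]) * p.comp (X + C ((k:ℤ)+1)) := by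
    rw [← Finset.sum_add_distrib]
    refine Finset.sum_congr rfl fun k hk => ?_
    simp only [Nat.choose_succ_succ]
    push_cast
    ring
  rw [add_right_comm, hcombine]
  simp

lemma cmpS_eq_zero (m : ℕ) (p : ℤ[X]) (hp : p = 0 ∨ p.natDegree < m) : cmpS m p = 0 := by
  induction m generalizing p with
  | zero =>
    rcases hp with rfl | h
    · simp [cmpS]
    · omega
  | succ m ih =>
    rw [cmpS_succ]
    apply ih
    by_cases h0 : p.natDegree = 0
    · left
      obtain ⟨a, rfl⟩ := Polynomial.natDegree_eq_zero.mp h0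
      simp
    · rcases hp with rfl | hd
      · left; simp
      · by_cases hz : p - p.comp (X + C 1) = 0
        · left; exact hz
        right
        have hp0 : p ≠ 0 := fun h => h0 (by simp [h])
        have hmonic : (X + C (1:ℤ)).Monic := Polynomial.monic_X_add_C 1
        have hnd1 : (X + C (1:ℤ)).natDegree = 1 := Polynomial.natDegree_X_add_C 1
        have hlc : (p.comp (X + C 1)).leadingCoeff = p.leadingCoeff := by
          rw [Polynomial.leadingCoeff_comp (by rw [hnd1]; omega)]
          rw [hmonic.leadingCoeff, one_pow, mul_one]
        have hcomp0 : p.comp (X + C 1) ≠ 0 := by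
          intro h
          rw [h, Polynomial.leadingCoeff_zero] at hlc
          exact hp0 (Polynomial.leadingCoeff_eq_zero.mp hlc.symm)
        have hnd : (p.comp (X + C 1)).natDegree = p.natDegree := by
          rw [Polynomial.natDegree_comp, hnd1, mul_one]
        have hdeg : p.degree = (p.comp (X + C 1)).degree := by
          rw [Polynomial.degree_eq_natDegree hp0, Polynomial.degree_eq_natDegree hcomp0, hnd]
        have hlt : (p - p.comp (X + C 1)).degree < p.degree :=
          Polynomial.degree_sub_lt hdeg hp0 hlc.symm
        have : (p - p.comp (X + C 1)).natDegree < p.natDegree :=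
          Polynomial.natDegree_lt_natDegree hz hlt
        omega

noncomputable def ak (k : ℕ) : ℤ[X] := if k = 0 then 1 else X * (X + C (k:ℤ))^(k-1)

noncomputable def abelP (m : ℕ) : Polynomial (ℤ[X]) :=
  ∑ k ∈ Finset.range (m+1),
    (m.choose k : Polynomial (ℤ[X])) * Polynomial.C (ak k) *
      (X - Polynomial.C (C (k:ℤ)))^(m-k)

lemma choose_mul_sub (m k : ℕ) (hk : k ≤ m) :
    (m+1).choose k * (m+1-k) = (m+1) * m.choose k := by
  have h1 := Nat.add_one_mul_choose_eq m (m-k)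
  have h2 : m.choose (m-k) = m.choose k := Nat.choose_symm hk
  have h3 : (m+1).choose (m-k+1) = (m+1).choose k := by
    have : m - k + 1 = m + 1 - k := by omega
    rw [this, Nat.choose_symm (by omega)]
  rw [h2, h3] at h1
  have : m - k + 1 = m + 1 - k := by omega
  rw [this] at h1
  omega

lemma ak_mul (m k : ℕ) (hk : k ≤ m + 1) :
    ak k * (X + C (k:ℤ))^(m+1-k) = X * (X + C (k:ℤ))^m := by
  unfold ak
  by_cases h0 : k = 0
  · subst h0; simp [pow_succ']
  · rw [if_neg h0, mul_assoc, ← pow_add]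
    congr 2
    omega

theorem abel (m : ℕ) : abelP m = (Polynomial.C (X:ℤ[X]) + X)^m := by
  induction m with
  | zero => simp [abelP, ak]
  | succ m ih =>
    set q : Polynomial (ℤ[X]) := abelP (m+1) - (Polynomial.C (X:ℤ[X]) + X)^(m+1) with hq
    have hder : derivative q = 0 := by
      rw [hq, derivative_sub]
      have h1 : derivative (abelP (m+1)) = ((m+1 : ℕ) : Polynomial (ℤ[X])) * abelP m := by
        unfold abelP
        rw [derivative_sum, Finset.mul_sum]
        rw [Finset.sum_range_succ]
        have hz : derivative ((((m+1).choose (m+1) : ℕ) : Polynomial (ℤ[X])) *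
            Polynomial.C (ak (m+1)) * (X - Polynomial.C (C ((m+1:ℕ):ℤ)))^(m+1-(m+1))) = 0 := by
          simp
        rw [hz, add_zero]
        refine Finset.sum_congr rfl fun k hk => ?_
        have hkm : k ≤ m := by simpa [Nat.lt_succ_iff] using hk
        rw [derivative_mul, derivative_mul, derivative_natCast, derivative_C]
        simp only [zero_mul, mul_zero, zero_add, add_zero]
        rw [derivative_pow, derivative_sub, derivative_X, derivative_C, sub_zero, mul_one]
        have harith : m + 1 - k - 1 = m - k := by omega
        rw [harith]
        have hcasts : ((m+1-k : ℕ) : Polynomial (ℤ[X])) = (((m+1-k : ℕ)) : Polynomial (ℤ[X])) := rfl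
        have key : (((m+1).choose k : ℕ) : Polynomial (ℤ[X])) * ((m+1-k : ℕ) : Polynomial (ℤ[X]))
            = ((m+1 : ℕ) : Polynomial (ℤ[X])) * ((m.choose k : ℕ) : Polynomial (ℤ[X])) := by
          rw [← Nat.cast_mul, ← Nat.cast_mul, choose_mul_sub m k hkm]
        calc ((m+1).choose k : Polynomial (ℤ[X])) * Polynomial.C (ak k) *
              (((m+1-k : ℕ) : Polynomial (ℤ[X])) * (X - Polynomial.C (C (k:ℤ)))^(m-k))
            = (((m+1).choose k : Polynomial (ℤ[X])) * ((m+1-k : ℕ) : Polynomial (ℤ[X]))) *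
              (Polynomial.C (ak k) * (X - Polynomial.C (C (k:ℤ)))^(m-k)) := by ring
          _ = ((m+1 : ℕ) : Polynomial (ℤ[X])) * ((m.choose k : Polynomial (ℤ[X])) *
              Polynomial.C (ak k) * (X - Polynomial.C (C (k:ℤ)))^(m-k)) := by rw [key]; ring
      have h2 : derivative ((Polynomial.C (X:ℤ[X]) + X)^(m+1)) =
          ((m+1 : ℕ) : Polynomial (ℤ[X])) * (Polynomial.C (X:ℤ[X]) + X)^m := by
        rw [derivative_pow]
        simp
      rw [h1, h2, ih, sub_self]
    have heval : Polynomial.eval (-(X:ℤ[X])) q = 0 := by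
      rw [hq]
      simp only [eval_sub, eval_pow, eval_add, eval_C, eval_X, add_neg_cancel]
      rw [zero_pow (Nat.succ_ne_zero m), sub_zero]
      unfold abelP
      simp only [eval_finset_sum, eval_mul, eval_pow, eval_sub, eval_X, eval_C, eval_natCast]
      have hterm : ∀ k ∈ Finset.range (m+2),
          ((m+1).choose k : ℤ[X]) * ak k * (-X - C (k:ℤ))^(m+1-k)
          = ((-1:ℤ[X])^(m+1) * X) * ((-1:ℤ[X])^k * ((m+1).choose k : ℤ[X]) * (X^m).comp (X + C (k:ℤ))) := by
        intro k hk
        have hk' : k ≤ m + 1 := by simpa [Nat.lt_succ_iff] using hk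
        have hneg : (-X - C (k:ℤ)) = -(X + C (k:ℤ)) := by ring
        rw [hneg, neg_pow]
        have hsign : (-1:ℤ[X])^(m+1-k) = (-1)^(m+1) * (-1)^k := by
          have h1 : (-1:ℤ[X])^(m+1-k) * ((-1:ℤ[X])^k * (-1:ℤ[X])^k) = (-1)^(m+1) * (-1)^k := by
            rw [← mul_assoc, ← pow_add]
            have : m + 1 - k + k = m + 1 := by omega
            rw [this]
          have h2 : (-1:ℤ[X])^k * (-1:ℤ[X])^k = 1 := by
            rw [← pow_add, ← two_mul, pow_mul]
            norm_num
          rwa [h2, mul_one] at h1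
        rw [Polynomial.X_pow_comp]
        calc ((m+1).choose k : ℤ[X]) * ak k * ((-1:ℤ[X])^(m+1-k) * (X + C (k:ℤ))^(m+1-k))
            = (-1:ℤ[X])^(m+1-k) * ((m+1).choose k : ℤ[X]) * (ak k * (X + C (k:ℤ))^(m+1-k)) := by ring
          _ = (-1:ℤ[X])^(m+1-k) * ((m+1).choose k : ℤ[X]) * (X * (X + C (k:ℤ))^m) := by
              rw [ak_mul m k hk']
          _ = _ := by rw [hsign]; ring
      rw [Finset.sum_congr rfl hterm, ← Finset.mul_sum]
      rw [show (∑ k ∈ Finset.range (m+2), (-1:ℤ[X])^k * ((m+1).choose k : ℤ[X]) * (X^m).comp (X + C (k:ℤ))) = cmpS (m+1) (X^m) from rfl]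
      rw [cmpS_eq_zero (m+1) (X^m) (Or.inr (by simp))]
      ring
    have hqz : q = 0 := by
      have hc := Polynomial.eq_C_of_derivative_eq_zero hder
      rw [hc, Polynomial.eval_C] at heval
      rw [hc, heval, map_zero]
    have h2 : abelP (m+1) - (Polynomial.C (X:ℤ[X]) + X)^(m+1) = 0 := by rw [← hq]; exact hqz
    exact sub_eq_zero.mp h2

lemma abel_spec (m : ℕ) :
    ∑ k ∈ Finset.range (m+1), C ((m.choose k : ℤ) * (((m:ℤ)-1-(k:ℤ))^(m-k))) * ak k
      = (X + C ((m:ℤ)-1))^m := by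
  have h := congrArg (Polynomial.eval (C ((m:ℤ)-1))) (abel m)
  unfold abelP at h
  simp only [eval_finset_sum, eval_mul, eval_pow, eval_sub, eval_add, eval_X, eval_C,
    eval_natCast] at h
  rw [← h]
  refine Finset.sum_congr rfl fun k hk => ?_
  rw [C_mul, ← C_eq_natCast, ← C_sub, ← C_pow]
  push_cast
  ring


-- count of cars with value < i
def cnt {n s : ℕ} (f : Fin n → Fin s) (i : ℕ) : ℕ :=
  (Finset.univ.filter (fun j => (f j).val < i)).card

def pk {n s : ℕ} (f : Fin n → Fin s) : Prop :=
  ∀ i ∈ Finset.Icc 1 n, i ≤ (Finset.univ.filter (fun j => (f j).val + 1 ≤ i)).card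

instance {n s : ℕ} : DecidablePred (pk (n := n) (s := s)) := fun _ => by
  unfold pk; infer_instance

noncomputable def enum (n s : ℕ) : ℤ[X] :=
  ∑ f ∈ Finset.univ.filter (pk (n := n) (s := s)),
    X ^ (Finset.univ.filter (fun j => (f j).val + 1 = 1)).card

noncomputable def wt {n s : ℕ} (f : Fin n → Fin s) : ℤ[X] := X ^ cnt f 1

lemma filter_lt_eq {n s : ℕ} (f : Fin n → Fin s) (i : ℕ) :
    (Finset.univ.filter (fun j => (f j).val + 1 ≤ i)) = (Finset.univ.filter (fun j => (f j).val < i)) := by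
  apply Finset.filter_congr
  intros
  exact Nat.lt_iff_add_one_le.symm

lemma filter_one_eq {n s : ℕ} (f : Fin n → Fin s) :
    (Finset.univ.filter (fun j => (f j).val + 1 = 1)) = (Finset.univ.filter (fun j => (f j).val < 1)) := by
  apply Finset.filter_congr
  intros
  simp [Nat.lt_one_iff]

lemma enum_eq {n s : ℕ} : enum n s = ∑ f ∈ Finset.univ.filter (pk (n := n) (s := s)), wt f := by
  unfold enum wt cnt
  exact Finset.sum_congr rfl fun f _ => by rw [filter_one_eq]

lemma pk_iff {n s : ℕ} (f : Fin n → Fin s) : pk f ↔ ∀ i ∈ Finset.Icc 1 n, i ≤ cnt f i := by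
  unfold pk cnt
  exact forall₂_congr fun i _ => by rw [filter_lt_eq]

lemma cnt_mono {n s : ℕ} (f : Fin n → Fin s) {i j : ℕ} (h : i ≤ j) : cnt f i ≤ cnt f j :=
  Finset.card_le_card (fun x hx => by
    simp only [Finset.mem_filter] at *; exact ⟨hx.1, lt_of_lt_of_le hx.2 h⟩)

lemma cnt_le {n s : ℕ} (f : Fin n → Fin s) (i : ℕ) : cnt f i ≤ n :=
  le_trans (Finset.card_filter_le _ _) (by simp)

lemma cnt_big {n s : ℕ} (f : Fin n → Fin s) {i : ℕ} (h : s ≤ i) : cnt f i = n := by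
  unfold cnt
  rw [Finset.filter_true_of_mem, Finset.card_univ, Fintype.card_fin]
  intro j _
  exact lt_of_lt_of_le (f j).isLt h

lemma enum_zero : enum 0 0 = 1 := by
  rw [enum_eq]
  rw [show (Finset.univ.filter (pk (n := 0) (s := 0))) = Finset.univ from Finset.filter_true_of_mem (by
    intro f _
    intro i hi
    simp at hi)]
  rw [show (Finset.univ : Finset (Fin 0 → Fin 0)) = {(Fin.elim0 : Fin 0 → Fin 0)} from by
    apply Finset.eq_singleton_iff_unique_mem.mpr
    exact ⟨Finset.mem_univ _, fun g _ => funext fun j => j.elim0⟩]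
  rw [Finset.sum_singleton]
  unfold wt cnt
  simp

-- workhorse: counting within S via its order iso
lemma cnt_restrict {n s m : ℕ} (f : Fin n → Fin s) (S : Finset (Fin n)) (hS : S.card = m)
    (i' : ℕ) (hsub : ∀ j, (f j).val < i' → j ∈ S) :
    cnt f i' = ((Finset.univ : Finset (Fin m)).filter
      (fun k => (f (S.orderIsoOfFin hS k)).val < i')).card := by
  unfold cnt
  apply Finset.card_bij' (fun j hj => (S.orderIsoOfFin hS).symm
      ⟨j, hsub j (Finset.mem_filter.mp hj).2⟩)
    (fun k _ => (S.orderIsoOfFin hS k : Fin n))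
  · intro j hj
    simp only [Finset.mem_filter, Finset.mem_univ, true_and]
    rw [OrderIso.apply_symm_apply]
    exact (Finset.mem_filter.mp hj).2
  · intro j hj
    rw [OrderIso.apply_symm_apply]
  · intro k hk
    exact (OrderIso.symm_apply_eq _).mpr (Subtype.ext rfl)
  · intro k hk
    simp only [Finset.mem_filter, Finset.mem_univ, true_and] at hk ⊢
    exact hk

lemma total_sum (n s : ℕ) (hs : 1 ≤ s) :
    ∑ f : Fin n → Fin s, wt f = (C ((s:ℤ)-1) + X)^n := by
  have hwt : ∀ f : Fin n → Fin s, wt f = ∏ j : Fin n, (if (f j).val < 1 then (X:ℤ[X]) else 1) := by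
    intro f
    rw [Finset.prod_ite, Finset.prod_const, Finset.prod_const, one_pow, mul_one]
    rfl
  simp only [hwt]
  have key := Finset.prod_univ_sum (fun _ : Fin n => (Finset.univ : Finset (Fin s)))
    (fun _ v => if (v:ℕ) < 1 then (X:ℤ[X]) else 1)
  rw [Fintype.piFinset_univ] at key
  rw [← key]
  have hcol : ∀ _j : Fin n, (∑ v : Fin s, if (v:ℕ) < 1 then (X:ℤ[X]) else 1) = X + C ((s:ℤ)-1) := by
    intro j
    rw [Finset.sum_ite, Finset.sum_const, Finset.sum_const]
    have h1 : (Finset.univ.filter (fun v : Fin s => (v:ℕ) < 1)) = {⟨0, hs⟩} := by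
      ext v
      simp [Fin.ext_iff, Nat.lt_one_iff]
    have h2 : (Finset.univ.filter (fun v : Fin s => ¬ (v:ℕ) < 1)).card = s - 1 := by
      have := Finset.card_filter_add_card_filter_not
        (s := (Finset.univ : Finset (Fin s))) (p := fun v : Fin s => (v:ℕ) < 1)
      rw [h1] at this
      simp only [Finset.card_singleton, Finset.card_univ, Fintype.card_fin] at this
      omega
    rw [h1, h2, Finset.card_singleton, one_smul, nsmul_eq_mul, mul_one]
    congr 1
    rw [← C_eq_natCast]
    congr 1
    omega
  rw [Finset.prod_congr rfl (fun j _ => hcol j), Finset.prod_const, Finset.card_univ,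
    Fintype.card_fin, add_comm]

def bad {n s : ℕ} (f : Fin n → Fin s) : Finset ℕ :=
  (Finset.Icc 1 (s-1)).filter (fun i => cnt f i < i)

noncomputable def cl {n s : ℕ} (f : Fin n → Fin s) : ℕ :=
  if h : (bad f).Nonempty then (bad f).min' h else 0

lemma mem_bad {n s i : ℕ} (f : Fin n → Fin s) :
    i ∈ bad f ↔ (1 ≤ i ∧ i ≤ s - 1) ∧ cnt f i < i := by
  unfold bad
  simp [Finset.mem_filter, Finset.mem_Icc]

lemma pk_iff_bad {n s : ℕ} (hs : 1 ≤ s) (hsn : s ≤ n) (f : Fin n → Fin s) :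
    pk f ↔ bad f = ∅ := by
  rw [pk_iff]
  constructor
  · intro h
    apply Finset.filter_false_of_mem
    intro i hi
    simp only [Finset.mem_Icc] at hi
    have := h i (Finset.mem_Icc.mpr ⟨hi.1, by omega⟩)
    omega
  · intro h i hi
    simp only [Finset.mem_Icc] at hi
    by_cases hcase : i ≤ s - 1
    · by_contra hc
      have : i ∈ bad f := (mem_bad f).mpr ⟨⟨hi.1, hcase⟩, by omega⟩
      rw [h] at this
      simp at this
    · rw [cnt_big f (by omega)]
      omega

lemma cl_lt {n s : ℕ} (hs : 1 ≤ s) (f : Fin n → Fin s) : cl f < s := by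
  unfold cl
  split
  · rename_i h
    have := (mem_bad f).mp (Finset.min'_mem (bad f) h)
    omega
  · omega

lemma cl_eq_zero_iff {n s : ℕ} (f : Fin n → Fin s) : cl f = 0 ↔ bad f = ∅ := by
  unfold cl
  split
  · rename_i h
    have hmem := (mem_bad f).mp (Finset.min'_mem (bad f) h)
    constructor
    · intro hz; omega
    · intro he
      exfalso
      obtain ⟨x, hx⟩ := h
      rw [he] at hx
      simp at hx
  · rename_i h
    simp only [true_iff]
    exact Finset.not_nonempty_iff_eq_empty.mp h

lemma cl_eq_iff {n s i : ℕ} (hi1 : 1 ≤ i) (his : i ≤ s - 1) (f : Fin n → Fin s) :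
    cl f = i ↔ (cnt f i = i - 1 ∧ ∀ i' ∈ Finset.Icc 1 (i-1), i' ≤ cnt f i') := by
  constructor
  · intro h
    have hne : (bad f).Nonempty := by
      by_contra hc
      unfold cl at h
      rw [dif_neg hc] at h
      omega
    unfold cl at h
    rw [dif_pos hne] at h
    have hmem := (mem_bad f).mp (h ▸ Finset.min'_mem (bad f) hne)
    have hmin : ∀ i' ∈ Finset.Icc 1 (i-1), i' ≤ cnt f i' := by
      intro i' hi'
      simp only [Finset.mem_Icc] at hi'
      by_contra hc
      have : i' ∈ bad f := (mem_bad f).mpr ⟨⟨hi'.1, by omega⟩, by omega⟩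
      have := Finset.min'_le (bad f) i' this
      omega
    refine ⟨?_, hmin⟩
    -- cnt f i = i - 1
    have hub : cnt f i ≤ i - 1 := by omega
    by_cases h1 : i = 1
    · subst h1; omega
    · have : i - 1 ≤ cnt f (i-1) := hmin (i-1) (Finset.mem_Icc.mpr ⟨by omega, le_refl _⟩)
      have := cnt_mono f (show i - 1 ≤ i by omega)
      omega
  · rintro ⟨h1, h2⟩
    have hmem : i ∈ bad f := (mem_bad f).mpr ⟨⟨hi1, his⟩, by omega⟩
    have hne : (bad f).Nonempty := ⟨i, hmem⟩
    unfold cl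
    rw [dif_pos hne]
    apply le_antisymm (Finset.min'_le _ _ hmem)
    by_contra hc
    push_neg at hc
    have hmm := (mem_bad f).mp (Finset.min'_mem (bad f) hne)
    have := h2 ((bad f).min' hne) (Finset.mem_Icc.mpr ⟨hmm.1.1, by omega⟩)
    omega

section Bij

variable {n s m : ℕ}

def phiF (hm2 : m + 2 ≤ s) (S : Finset (Fin n)) (hS : S.card = m) (hc : Sᶜ.card = n - m)
    (p : (Fin m → Fin m) × (Fin (n-m) → Fin (s-(m+1)))) : Fin n → Fin s := fun j =>
  if h : j ∈ S then ⟨(p.1 ((S.orderIsoOfFin hS).symm ⟨j, h⟩)).val,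
    lt_of_lt_of_le (p.1 _).isLt (by omega)⟩
  else Fin.mk ((p.2 ((Sᶜ.orderIsoOfFin hc).symm ⟨j, Finset.mem_compl.mpr h⟩)).val + (m+1))
    (by have h2 := (p.2 ((Sᶜ.orderIsoOfFin hc).symm ⟨j, Finset.mem_compl.mpr h⟩)).isLt; omega)

def psiF (hm2 : m + 2 ≤ s) (S : Finset (Fin n)) (hS : S.card = m) (hc : Sᶜ.card = n - m)
    (f : Fin n → Fin s) : (Fin m → Fin m) × (Fin (n-m) → Fin (s-(m+1))) :=
  (fun k => if h : (f (S.orderIsoOfFin hS k)).val < m then ⟨(f (S.orderIsoOfFin hS k)).val, h⟩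
    else k,
   fun k => ⟨(f (Sᶜ.orderIsoOfFin hc k)).val - (m+1),
    by have := (f (Sᶜ.orderIsoOfFin hc k)).isLt; omega⟩)

lemma symm_coe (S : Finset (Fin n)) (hS : S.card = m) (k : Fin m) (h : (S.orderIsoOfFin hS k : Fin n) ∈ S) :
    (S.orderIsoOfFin hS).symm ⟨(S.orderIsoOfFin hS k : Fin n), h⟩ = k :=
  (OrderIso.symm_apply_eq _).mpr (Subtype.ext rfl)

lemma phiF_eS (hm2 : m + 2 ≤ s) (S : Finset (Fin n)) (hS : S.card = m) (hc : Sᶜ.card = n - m)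
    (p : (Fin m → Fin m) × (Fin (n-m) → Fin (s-(m+1)))) (k : Fin m) :
    (phiF hm2 S hS hc p (S.orderIsoOfFin hS k)).val = (p.1 k).val := by
  have h : (S.orderIsoOfFin hS k : Fin n) ∈ S := (S.orderIsoOfFin hS k).2
  simp only [phiF, dif_pos h, symm_coe S hS k h]

lemma phiF_eC (hm2 : m + 2 ≤ s) (S : Finset (Fin n)) (hS : S.card = m) (hc : Sᶜ.card = n - m)
    (p : (Fin m → Fin m) × (Fin (n-m) → Fin (s-(m+1)))) (k : Fin (n-m)) :
    (phiF hm2 S hS hc p (Sᶜ.orderIsoOfFin hc k)).val = (p.2 k).val + (m+1) := by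
  have h : (Sᶜ.orderIsoOfFin hc k : Fin n) ∉ S := by
    have := (Sᶜ.orderIsoOfFin hc k).2
    exact Finset.mem_compl.mp this
  have h2 : (Sᶜ.orderIsoOfFin hc).symm ⟨(Sᶜ.orderIsoOfFin hc k : Fin n), Finset.mem_compl.mpr h⟩ = k :=
    (OrderIso.symm_apply_eq _).mpr (Subtype.ext rfl)
  simp only [phiF, dif_neg h, h2]

lemma phiF_mem_iff (hm2 : m + 2 ≤ s) (S : Finset (Fin n)) (hS : S.card = m) (hc : Sᶜ.card = n - m)
    (p : (Fin m → Fin m) × (Fin (n-m) → Fin (s-(m+1)))) (j : Fin n) :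
    (phiF hm2 S hS hc p j).val < m + 1 ↔ j ∈ S := by
  constructor
  · intro hv
    by_contra h
    simp only [phiF, dif_neg h] at hv
    omega
  · intro h
    simp only [phiF, dif_pos h]
    exact lt_of_lt_of_le (p.1 _).isLt (by omega)

end Bij

open scoped Classical in
lemma fiber_S (n s m : ℕ) (hm2 : m + 2 ≤ s) (hsn : s ≤ n)
    (S : Finset (Fin n)) (hS : S.card = m) :
    ∑ f ∈ Finset.univ.filter (fun f : Fin n → Fin s =>
        ((cnt f (m+1) = m ∧ ∀ i' ∈ Finset.Icc 1 m, i' ≤ cnt f i') ∧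
        Finset.univ.filter (fun j => (f j).val < m+1) = S)),
      wt f
    = enum m m * C (((s:ℤ)-(m+1))^(n-m)) := by
  have hc : Sᶜ.card = n - m := by rw [Finset.card_compl, hS]; simp
  -- facts about members of the filtered set
  have hfacts : ∀ f : Fin n → Fin s,
      ((cnt f (m+1) = m ∧ ∀ i' ∈ Finset.Icc 1 m, i' ≤ cnt f i') ∧
        Finset.univ.filter (fun j => (f j).val < m+1) = S) →
      (∀ j ∈ S, (f j).val < m) ∧ (∀ j, j ∉ S → m + 1 ≤ (f j).val) := by
    intro f ⟨⟨hcnt, hmin⟩, hSet⟩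
    have hSm : Finset.univ.filter (fun j => (f j).val < m) = S := by
      apply Finset.eq_of_subset_of_card_le
      · rw [← hSet]
        intro x hx
        simp only [Finset.mem_filter, Finset.mem_univ, true_and] at hx ⊢
        omega
      · rw [hS]
        show m ≤ cnt f m
        rcases Nat.eq_zero_or_pos m with rfl | hm0
        · exact Nat.zero_le _
        · exact hmin m (Finset.mem_Icc.mpr ⟨hm0, le_refl m⟩)
    constructor
    · intro j hj
      rw [← hSm] at hj
      exact (Finset.mem_filter.mp hj).2
    · intro j hj
      by_contra hcon
      push_neg at hcon
      have : j ∈ S := by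
        rw [← hSet]
        simp only [Finset.mem_filter, Finset.mem_univ, true_and]
        omega
      exact hj this
  -- cnt of the restriction agrees
  have hkey : ∀ (f : Fin n → Fin s),
      (Finset.univ.filter (fun j => (f j).val < m+1) = S) →
      (∀ j ∈ S, (f j).val < m) →
      ∀ i', i' ≤ m + 1 → cnt ((psiF hm2 S hS hc f).1) i' = cnt f i' := by
    intro f hSet hvalS i' hi'
    rw [cnt_restrict f S hS i' (fun j hj => by
      rw [← hSet]
      simp only [Finset.mem_filter, Finset.mem_univ, true_and]
      omega)]
    unfold cnt
    congr 1
    apply Finset.filter_congr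
    intro k _
    have hk := hvalS (S.orderIsoOfFin hS k) (S.orderIsoOfFin hS k).2
    simp only [psiF, dif_pos hk]
  have main : ∑ f ∈ Finset.univ.filter (fun f : Fin n → Fin s =>
        ((cnt f (m+1) = m ∧ ∀ i' ∈ Finset.Icc 1 m, i' ≤ cnt f i') ∧
        Finset.univ.filter (fun j => (f j).val < m+1) = S)),
      wt f
      = ∑ p ∈ (Finset.univ.filter (pk (n := m) (s := m)) ×ˢ
          (Finset.univ : Finset (Fin (n-m) → Fin (s-(m+1))))), wt p.1 := by
    apply Finset.sum_nbij' (i := psiF hm2 S hS hc) (j := phiF hm2 S hS hc)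
    · -- maps into product
      intro f hf
      simp only [Finset.mem_filter, Finset.mem_univ, true_and] at hf
      obtain ⟨hvalS, _⟩ := hfacts f hf
      obtain ⟨⟨hcnt, hmin⟩, hSet⟩ := hf
      rw [Finset.mem_product]
      refine ⟨?_, Finset.mem_univ _⟩
      simp only [Finset.mem_filter, Finset.mem_univ, true_and]
      rw [pk_iff]
      intro i' hi'
      rw [Finset.mem_Icc] at hi'
      rw [hkey f hSet hvalS i' (by omega)]
      exact hmin i' (Finset.mem_Icc.mpr ⟨hi'.1, hi'.2⟩)
    · -- phi maps into the filtered set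
      intro p hp
      rw [Finset.mem_product] at hp
      have hpk := (Finset.mem_filter.mp hp.1).2
      simp only [Finset.mem_filter, Finset.mem_univ, true_and]
      have hphiS : Finset.univ.filter (fun j => (phiF hm2 S hS hc p j).val < m+1) = S := by
        ext j
        simp only [Finset.mem_filter, Finset.mem_univ, true_and]
        exact phiF_mem_iff hm2 S hS hc p j
      refine ⟨⟨?_, ?_⟩, hphiS⟩
      · show cnt _ (m+1) = m
        unfold cnt
        rw [hphiS, hS]
      · intro i' hi'
        rw [Finset.mem_Icc] at hi'
        rw [cnt_restrict (phiF hm2 S hS hc p) S hS i' (fun j hj => by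
          rw [← hphiS]
          simp only [Finset.mem_filter, Finset.mem_univ, true_and]
          omega)]
        rw [Finset.filter_congr (fun k _ => by rw [phiF_eS hm2 S hS hc p k] : ∀ k ∈ (Finset.univ : Finset (Fin m)), ((phiF hm2 S hS hc p (S.orderIsoOfFin hS k)).val < i') ↔ ((p.1 k).val < i'))]
        have := (pk_iff p.1).mp hpk i' (Finset.mem_Icc.mpr ⟨hi'.1, hi'.2⟩)
        exact this
    · -- left inverse
      intro f hf
      simp only [Finset.mem_filter, Finset.mem_univ, true_and] at hf
      obtain ⟨hvalS, hvalC⟩ := hfacts f hf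
      funext j
      by_cases hj : j ∈ S
      · apply Fin.ext
        simp only [phiF, dif_pos hj, psiF, OrderIso.apply_symm_apply]
        rw [dif_pos (hvalS j hj)]
      · apply Fin.ext
        simp only [phiF, dif_neg hj, psiF, OrderIso.apply_symm_apply]
        have := hvalC j hj
        omega
    · -- right inverse
      intro p hp
      refine Prod.ext (funext fun k => ?_) (funext fun k => ?_)
      · apply Fin.ext
        have h1 := phiF_eS hm2 S hS hc p k
        simp only [psiF, h1, dif_pos (p.1 k).isLt]
      · apply Fin.ext
        have h2 := phiF_eC hm2 S hS hc p k
        simp only [psiF, h2]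
        omega
    · -- weights
      intro f hf
      simp only [Finset.mem_filter, Finset.mem_univ, true_and] at hf
      obtain ⟨hvalS, _⟩ := hfacts f hf
      unfold wt
      rw [hkey f hf.2 hvalS 1 (by omega)]
  rw [main, Finset.sum_product]
  have hcard : (Finset.univ : Finset (Fin (n-m) → Fin (s-(m+1)))).card = (s-(m+1))^(n-m) := by
    rw [Finset.card_univ]
    simp [Fintype.card_fun]
  calc (∑ g ∈ Finset.univ.filter (pk (n := m) (s := m)),
          ∑ _h ∈ (Finset.univ : Finset (Fin (n-m) → Fin (s-(m+1)))), wt g)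
      = ∑ g ∈ Finset.univ.filter (pk (n := m) (s := m)), (s-(m+1))^(n-m) • wt g := by
        refine Finset.sum_congr rfl fun g _ => ?_
        rw [Finset.sum_const, hcard]
    _ = ((s-(m+1))^(n-m) : ℕ) • ∑ g ∈ Finset.univ.filter (pk (n := m) (s := m)), wt g := by
        rw [Finset.smul_sum]
    _ = enum m m * C (((s:ℤ)-(m+1))^(n-m)) := by
        rw [← enum_eq, nsmul_eq_mul, mul_comm]
        congr 1
        rw [← C_eq_natCast]
        congr 1
        rw [Nat.cast_pow, Nat.cast_sub (by omega)]
        push_cast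
        ring

open scoped Classical in
lemma fiber (n s m : ℕ) (hm2 : m + 2 ≤ s) (hsn : s ≤ n) :
    ∑ f ∈ Finset.univ.filter (fun f : Fin n → Fin s => cl f = m + 1), wt f
    = C ((n.choose m : ℤ) * ((s:ℤ)-(m+1))^(n-m)) * enum m m := by
  have hstep : Finset.univ.filter (fun f : Fin n → Fin s => cl f = m + 1)
      = Finset.univ.filter (fun f : Fin n → Fin s =>
          (cnt f (m+1) = m ∧ ∀ i' ∈ Finset.Icc 1 m, i' ≤ cnt f i')) := by
    ext f
    simp only [Finset.mem_filter, Finset.mem_univ, true_and]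
    have := cl_eq_iff (i := m+1) (by omega) (by omega : m + 1 ≤ s - 1) f
    simpa using this
  rw [hstep]
  rw [← Finset.sum_fiberwise_of_maps_to (g := fun f : Fin n → Fin s =>
      Finset.univ.filter (fun j => (f j).val < m+1)) (t := Finset.powersetCard m Finset.univ)
      (fun f hf => by
        simp only [Finset.mem_filter, Finset.mem_univ, true_and] at hf
        rw [Finset.mem_powersetCard_univ]
        show cnt f (m+1) = m
        exact hf.1)]
  have hinner : ∀ S ∈ Finset.powersetCard m (Finset.univ : Finset (Fin n)),
      ∑ f ∈ (Finset.univ.filter (fun f : Fin n → Fin s =>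
          (cnt f (m+1) = m ∧ ∀ i' ∈ Finset.Icc 1 m, i' ≤ cnt f i'))).filter
          (fun f => Finset.univ.filter (fun j => (f j).val < m+1) = S), wt f
      = enum m m * C (((s:ℤ)-(m+1))^(n-m)) := by
    intro S hSmem
    rw [Finset.mem_powersetCard_univ] at hSmem
    rw [Finset.filter_filter]
    exact fiber_S n s m hm2 hsn S hSmem
  rw [Finset.sum_congr rfl hinner, Finset.sum_const, Finset.card_powersetCard,
    Finset.card_univ, Fintype.card_fin, nsmul_eq_mul]
  rw [C_mul, ← C_eq_natCast]
  ring

open scoped Classical in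
lemma decomposition (n s : ℕ) (hs1 : 1 ≤ s) (hsn : s ≤ n) :
    (C ((s:ℤ)-1) + X)^n = enum n s
      + ∑ j ∈ Finset.range (s-1), C ((n.choose j : ℤ) * ((s:ℤ)-1-j)^(n-j)) * enum j j := by
  obtain ⟨t, rfl⟩ : ∃ t, s = t + 1 := ⟨s - 1, by omega⟩
  simp only [Nat.add_sub_cancel]
  rw [← total_sum n (t+1) hs1]
  rw [← Finset.sum_fiberwise_of_maps_to (g := fun f : Fin n → Fin (t+1) => cl f)
    (t := Finset.range (t+1)) (fun f _ => Finset.mem_range.mpr (cl_lt hs1 f))]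
  rw [Finset.sum_range_succ']
  have hfib0 : (Finset.univ.filter (fun f : Fin n → Fin (t+1) => cl f = 0)) =
      Finset.univ.filter (pk (n := n) (s := t+1)) := by
    ext f
    simp only [Finset.mem_filter, Finset.mem_univ, true_and]
    rw [cl_eq_zero_iff, ← pk_iff_bad hs1 hsn]
  rw [hfib0, ← enum_eq, add_comm]
  congr 1
  refine Finset.sum_congr rfl fun j hj => ?_
  rw [Finset.mem_range] at hj
  rw [fiber n (t+1) j (by omega) hsn]
  have hc : ((t+1:ℕ):ℤ) - (↑j+1) = ((t+1:ℕ):ℤ) - 1 - ↑j := by ring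
  rw [hc]

open scoped Classical in
lemma enum_diag : ∀ m, enum m m = ak m := by
  intro m
  induction m using Nat.strong_induction_on with
  | _ m ih =>
    rcases Nat.eq_zero_or_pos m with rfl | hm
    · rw [enum_zero]; simp [ak]
    · have hdec := decomposition m m hm (le_refl m)
      have habel := abel_spec m
      rw [Finset.sum_range_succ] at habel
      obtain ⟨t, rfl⟩ : ∃ t, m = t + 1 := ⟨m - 1, by omega⟩
      rw [Finset.sum_range_succ] at habel
      have hm_term : C (((t+1).choose (t+1) : ℤ) * ((((t+1):ℕ):ℤ)-1-((t+1:ℕ):ℤ))^((t+1)-(t+1))) * ak (t+1)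
          = ak (t+1) := by
        rw [Nat.sub_self, pow_zero, mul_one, Nat.choose_self]
        simp
      have ht_term : C (((t+1).choose t : ℤ) * ((((t+1):ℕ):ℤ)-1-(t:ℤ))^((t+1)-t)) * ak t = 0 := by
        have h1 : (((t+1):ℕ):ℤ)-1-(t:ℤ) = 0 := by push_cast; ring
        have h2 : (t+1) - t = 1 := by omega
        rw [h1, h2, pow_one, mul_zero, map_zero, zero_mul]
      rw [hm_term, ht_term, add_zero] at habel
      have hsum : ∑ j ∈ Finset.range ((t+1)-1), C (((t+1).choose j : ℤ) * ((((t+1):ℕ):ℤ)-1-j)^((t+1)-j)) * enum j j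
          = ∑ j ∈ Finset.range t, C (((t+1).choose j : ℤ) * ((((t+1):ℕ):ℤ)-1-j)^((t+1)-j)) * ak j := by
        rw [show (t+1)-1 = t from by omega]
        exact Finset.sum_congr rfl fun j hj => by rw [ih j (by rw [Finset.mem_range] at hj; omega)]
      rw [hsum] at hdec
      linear_combination -habel - hdec

open Polynomial in
open Classical in
theorem restricted_ones_enumerator_complement (n s : ℕ) (h1 : 1 ≤ s) (h2 : s ≤ n) :
    ∑ π ∈ Finset.univ.filter
        (fun π : Fin n → Fin s =>
          ∀ i ∈ Finset.Icc 1 n,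
            i ≤ (Finset.univ.filter (fun j => (π j).val + 1 ≤ i)).card),
      (X : Polynomial ℤ) ^ (Finset.univ.filter (fun j => (π j).val + 1 = 1)).card
    = (C ((s : ℤ) - 1) + X) ^ n - C (((s : ℤ) - 1) ^ n) -
        ∑ i ∈ Finset.Icc 1 (s - 1),
          C (n.choose i : ℤ) * X * (X + C (i : ℤ)) ^ (i - 1) *
            C (((s : ℤ) - i - 1) ^ (n - i)) := by
  have hlhs : (∑ π ∈ Finset.univ.filter
        (fun π : Fin n → Fin s =>
          ∀ i ∈ Finset.Icc 1 n,
            i ≤ (Finset.univ.filter (fun j => (π j).val + 1 ≤ i)).card),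
      (X : Polynomial ℤ) ^ (Finset.univ.filter (fun j => (π j).val + 1 = 1)).card) = enum n s := by
    unfold enum
    apply Finset.sum_congr
    · ext f
      simp only [Finset.mem_filter, Finset.mem_univ, true_and]
      exact Iff.rfl
    · intro f _
      rfl
  rw [hlhs]
  have key := decomposition n s h1 h2
  have hsum_ak : ∑ j ∈ Finset.range (s-1), C ((n.choose j : ℤ) * ((s:ℤ)-1-j)^(n-j)) * enum j j
      = ∑ j ∈ Finset.range (s-1), C ((n.choose j : ℤ) * ((s:ℤ)-1-j)^(n-j)) * ak j :=
    Finset.sum_congr rfl fun j _ => by rw [enum_diag j]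
  rw [hsum_ak] at key
  obtain ⟨t, rfl⟩ : ∃ t, s = t + 1 := ⟨s - 1, by omega⟩
  simp only [Nat.add_sub_cancel] at key ⊢
  -- rewrite the Icc-sum into the range-form sum
  have hIcc : ∑ i ∈ Finset.Icc 1 t,
        C ((n.choose i : ℤ)) * X * (X + C (i : ℤ)) ^ (i - 1) * C ((((t+1:ℕ):ℤ) - i - 1) ^ (n - i))
      = ∑ j ∈ Finset.range t, C ((n.choose (j+1) : ℤ) * ((((t+1:ℕ):ℤ))-1-((j+1:ℕ):ℤ))^(n-(j+1))) * ak (j+1) := by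
    rw [show Finset.Icc 1 t = Finset.Ico 1 (t+1) from by rw [Finset.Ico_add_one_right_eq_Icc]]
    rw [Finset.sum_Ico_eq_sum_range]
    simp only [Nat.add_sub_cancel]
    refine Finset.sum_congr rfl fun j hj => ?_
    rw [show 1 + j = j + 1 from by omega]
    rw [show ak (j+1) = X * (X + C ((j+1:ℕ):ℤ))^((j+1)-1) from by rw [ak, if_neg (by omega)]]
    rw [C_mul]
    rw [show ((((t+1:ℕ):ℤ))-1-((j+1:ℕ):ℤ)) = (((t+1:ℕ):ℤ) - ((j+1:ℕ):ℤ) - 1) from by ring]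
    ring
  rw [hIcc]
  -- extend the range-(t) sum in key to match: peel first term of range (t+1)
  have hzero : C ((n.choose t : ℤ) * ((((t+1:ℕ):ℤ))-1-(t:ℤ))^(n-t)) * ak t = 0 := by
    have hb : ((((t+1:ℕ):ℤ))-1-(t:ℤ)) = 0 := by push_cast; ring
    rw [hb, zero_pow (by omega : n - t ≠ 0), mul_zero, map_zero, zero_mul]
  have hrange : ∑ j ∈ Finset.range t, C ((n.choose j : ℤ) * ((((t+1:ℕ):ℤ))-1-(j:ℤ))^(n-j)) * ak j
      = C ((((t+1:ℕ):ℤ) - 1)^n)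
        + ∑ j ∈ Finset.range t, C ((n.choose (j+1) : ℤ) * ((((t+1:ℕ):ℤ))-1-((j+1:ℕ):ℤ))^(n-(j+1))) * ak (j+1) := by
    have hext : ∑ j ∈ Finset.range t, C ((n.choose j : ℤ) * ((((t+1:ℕ):ℤ))-1-(j:ℤ))^(n-j)) * ak j
        = ∑ j ∈ Finset.range (t+1), C ((n.choose j : ℤ) * ((((t+1:ℕ):ℤ))-1-(j:ℤ))^(n-j)) * ak j := by
      rw [Finset.sum_range_succ, hzero, add_zero]
    rw [hext, Finset.sum_range_succ']
    rw [add_comm]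
    congr 1
    · simp [ak]
  rw [hrange] at key
  linear_combination -key
end
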